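/- For every natural number k ≥ 2 there exists a periodic k-coloring c of the plane with p^per(c) ≤ 1/k. (This is the right-hand inequality of Theorem 1.) -/

import Mathlib

open MeasureTheory Real

noncomputable section

abbrev Plane := EuclideanSpace ℝ (Fin 2)

def vec (x y : ℝ) : Plane := (WithLp.equiv 2 (Fin 2 → ℝ)).symm ![x, y]

def dir (θ : ℝ) : Plane := vec (Real.cos θ) (Real.sin θ)

/-- The fundamental parallelogram `{t•u + s•v : 0 ≤ t, s < 1}`. -/
def para (u v : Plane) : Set Plane :=
  {x | ∃ t s : ℝ, 0 ≤ t ∧ t < 1 ∧ 0 ≤ s ∧ s < 1 ∧ x = t • u + s • v}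

/-- `p^per(c)` for a periodic coloring with fundamental parallelogram `para u v`. -/
def pper {k : ℕ} (c : Plane → Fin k) (u v : Plane) : ℝ :=
  (1 / (2 * π * (volume (para u v)).toReal)) *
    ∫ a in para u v, ∫ θ in (0:ℝ)..(2*π),
      (if c a = c (a + dir θ) then (1:ℝ) else 0)

lemma ind_ii (P : ℝ → Prop) [DecidablePred P] (hP : MeasurableSet {θ | P θ}) (a b : ℝ) :
    IntervalIntegrable (fun θ => if P θ then (1:ℝ) else 0) volume a b := by
  rw [intervalIntegrable_iff]
  have h : (fun θ => if P θ then (1:ℝ) else 0) = Set.indicator {θ | P θ} (fun _ => 1) := by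
    ext θ; simp [Set.indicator]
  rw [h]
  exact (IntegrableOn.integrable (integrableOn_const measure_Ioc_lt_top.ne)).indicator hP

lemma half_bound (P : ℝ → Prop) [DecidablePred P] (hP : MeasurableSet {θ | P θ}) (c₁ c₂ : ℝ)
    (h0 : 0 ≤ c₁) (h12 : c₁ ≤ c₂) (h2 : c₂ ≤ π)
    (himp : ∀ θ, 0 ≤ θ → θ ≤ π → P θ → (c₁ < θ ∧ θ ≤ c₂)) :
    ∫ θ in (0:ℝ)..π, (if P θ then (1:ℝ) else 0) ≤ c₂ - c₁ := by
  have hii := ind_ii P hP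
  have hs1 : (∫ θ in (0:ℝ)..π, (if P θ then (1:ℝ) else 0))
      = (∫ θ in (0:ℝ)..c₁, (if P θ then (1:ℝ) else 0))
        + ((∫ θ in c₁..c₂, (if P θ then (1:ℝ) else 0))
          + (∫ θ in c₂..π, (if P θ then (1:ℝ) else 0))) := by
    rw [intervalIntegral.integral_add_adjacent_intervals (hii _ _) (hii _ _),
      intervalIntegral.integral_add_adjacent_intervals (hii _ _) (hii _ _)]
  have z1 : (∫ θ in (0:ℝ)..c₁, (if P θ then (1:ℝ) else 0)) = 0 := by
    rw [intervalIntegral.integral_of_le h0,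
      MeasureTheory.setIntegral_congr_fun (g := fun _ => (0:ℝ)) measurableSet_Ioc]
    · simp
    · intro θ hθ
      have : ¬ P θ := fun hp => absurd (himp θ hθ.1.le (hθ.2.trans (h12.trans h2)) hp).1
        (not_lt.2 hθ.2)
      simp [this]
  have z2 : (∫ θ in c₂..π, (if P θ then (1:ℝ) else 0)) = 0 := by
    rw [intervalIntegral.integral_of_le h2,
      MeasureTheory.setIntegral_congr_fun (g := fun _ => (0:ℝ)) measurableSet_Ioc]
    · simp
    · intro θ hθ
      have : ¬ P θ := fun hp => absurd (himp θ ((h0.trans (h12.trans hθ.1.le))) hθ.2 hp).2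
        (not_le.2 hθ.1)
      simp [this]
  have mid : (∫ θ in c₁..c₂, (if P θ then (1:ℝ) else 0)) ≤ c₂ - c₁ := by
    have := intervalIntegral.integral_mono_on (μ := volume) (f := fun θ => if P θ then (1:ℝ) else 0)
      (g := fun _ => (1:ℝ)) h12 (hii _ _) intervalIntegrable_const
      (fun x _ => by split <;> norm_num)
    simpa using this
  linarith [hs1, z1, z2, mid]

lemma arcsin_le_bound (z : ℝ) (h0 : 0 ≤ z) (h1 : z ≤ 1) : Real.arcsin z ≤ π/2 * z := by
  have h := Real.mul_le_sin (x := Real.arcsin z) (Real.arcsin_nonneg.2 h0)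
    (Real.arcsin_le_pi_div_two z)
  rw [Real.sin_arcsin (by linarith) h1] at h
  have hπ := Real.pi_pos
  calc Real.arcsin z = (π/2) * (2/π * Real.arcsin z) := by field_simp
  _ ≤ π/2 * z := by nlinarith

lemma theta_bound (P : ℝ → Prop) [DecidablePred P] (hP : MeasurableSet {θ | P θ}) (α β : ℝ)
    (hα : -1 ≤ α) (hα0 : α ≤ 0) (hβ0 : 0 ≤ β) (hβ : β ≤ 1)
    (himp : ∀ θ, P θ → α ≤ Real.cos θ ∧ Real.cos θ < β) :
    ∫ θ in (0:ℝ)..(2*π), (if P θ then (1:ℝ) else 0)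
      ≤ 2*(Real.arccos α - Real.arccos β) := by
  have hπ := Real.pi_pos
  set c₁ := Real.arccos β with hc₁
  set c₂ := Real.arccos α with hc₂
  have h0 : 0 ≤ c₁ := Real.arccos_nonneg β
  have h12 : c₁ ≤ c₂ := by
    rw [hc₁, hc₂, Real.arccos_eq_pi_div_two_sub_arcsin, Real.arccos_eq_pi_div_two_sub_arcsin]
    have := Real.monotone_arcsin (hα0.trans hβ0)
    linarith
  have h2 : c₂ ≤ π := Real.arccos_le_pi α
  have key : ∀ θ, 0 ≤ θ → θ ≤ π → (α ≤ Real.cos θ ∧ Real.cos θ < β) → (c₁ < θ ∧ θ ≤ c₂) := by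
    intro θ hθ0 hθπ ⟨hcα, hcβ⟩
    constructor
    · by_contra hcon
      push_neg at hcon
      have : β ≤ Real.cos θ := by
        have := Real.cos_le_cos_of_nonneg_of_le_pi hθ0 (Real.arccos_le_pi β) hcon
        rwa [Real.cos_arccos (by linarith) hβ] at this
      linarith
    · have : Real.arccos (Real.cos θ) ≤ c₂ := by
        rw [hc₂, Real.arccos_eq_pi_div_two_sub_arcsin, Real.arccos_eq_pi_div_two_sub_arcsin]
        have := Real.monotone_arcsin hcα
        linarith
      rwa [Real.arccos_cos hθ0 hθπ] at this
  have hii := ind_ii P hP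
  have hsplit : (∫ θ in (0:ℝ)..(2*π), (if P θ then (1:ℝ) else 0))
      = (∫ θ in (0:ℝ)..π, (if P θ then (1:ℝ) else 0))
        + (∫ θ in π..(2*π), (if P θ then (1:ℝ) else 0)) := by
    rw [intervalIntegral.integral_add_adjacent_intervals (hii _ _) (hii _ _)]
  have hrefl : (∫ θ in π..(2*π), (if P θ then (1:ℝ) else 0))
      = ∫ θ in (0:ℝ)..π, (if P (2*π - θ) then (1:ℝ) else 0) := by
    have := intervalIntegral.integral_comp_sub_left (a := (0:ℝ)) (b := π)
      (fun θ => if P θ then (1:ℝ) else 0) (2*π)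
    rw [show 2*π - π = π by ring, show 2*π - 0 = 2*π by ring] at this
    exact this.symm
  have h1 : (∫ θ in (0:ℝ)..π, (if P θ then (1:ℝ) else 0)) ≤ c₂ - c₁ :=
    half_bound P hP c₁ c₂ h0 h12 h2 (fun θ hθ0 hθπ hp => key θ hθ0 hθπ (himp θ hp))
  have h2' : (∫ θ in (0:ℝ)..π, (if P (2*π - θ) then (1:ℝ) else 0)) ≤ c₂ - c₁ := by
    have hPm : MeasurableSet {θ : ℝ | P (2*π - θ)} := by
      have : {θ : ℝ | P (2*π - θ)} = (fun θ : ℝ => 2*π - θ) ⁻¹' {θ | P θ} := rfl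
      rw [this]
      exact (measurable_const.sub measurable_id) hP
    refine half_bound _ hPm c₁ c₂ h0 h12 h2 ?_
    intro θ hθ0 hθπ hp
    have := himp _ hp
    rw [Real.cos_two_pi_sub] at this
    exact key θ hθ0 hθπ this
  linarith [hsplit, hrefl, h1, h2']

set_option maxHeartbeats 2000000 in
/-- Right-hand inequality of Theorem 1: for every `k ≥ 2` there is a periodic
`k`-coloring `c` of the plane with `p^per(c) ≤ 1/k`. -/
theorem stmt1 (k : ℕ) (hk : 2 ≤ k) :
    ∃ (c : Plane → Fin k) (u v : Plane), Measurable c ∧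
      LinearIndependent ℝ ![u, v] ∧
      (∀ x : Plane, c (x + u) = c x ∧ c (x + v) = c x) ∧
      pper c u v ≤ 1 / k := by
  have hπ := Real.pi_pos
  have hk0 : (0:ℝ) < k := by positivity
  set N : ℕ := k - 1 with hNdef
  have hN1 : 1 ≤ N := by omega
  have hNk : (N:ℝ) = (k:ℝ) - 1 := by
    rw [hNdef, Nat.cast_sub (by omega : 1 ≤ k)]; norm_num
  have hk2 : (2:ℝ) ≤ (k:ℝ) := by exact_mod_cast hk
  have hNpos : (0:ℝ) < N := by rw [hNk]; linarith
  set q : ℝ := (k:ℝ) / N with hqdef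
  have hq : 0 < q := by positivity
  have hNq : (N:ℝ) * q = k := by rw [hqdef]; field_simp
  set u : Plane := vec 0 1 with hu
  set v : Plane := vec q 0 with hv
  have hkzp : (0:ℤ) < (k:ℤ) := by exact_mod_cast (by omega : 0 < k)
  have hkz : (k:ℤ) ≠ 0 := ne_of_gt hkzp
  have hmodlt : ∀ z : ℤ, (z % (k:ℤ)).toNat < k := by
    intro z
    have h1 : 0 ≤ z % (k:ℤ) := Int.emod_nonneg z hkz
    have h2 : z % (k:ℤ) < k := Int.emod_lt_of_pos z hkzp
    omega
  set c : Plane → Fin k := fun x => ⟨(⌊(N:ℝ) * x 0⌋ % (k:ℤ)).toNat, hmodlt _⟩ with hc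
  have hceq : ∀ x y : Plane, c x = c y ↔ ⌊(N:ℝ) * x 0⌋ % (k:ℤ) = ⌊(N:ℝ) * y 0⌋ % (k:ℤ) := by
    intro x y
    rw [hc]
    constructor
    · intro h
      have h' : (⌊(N:ℝ) * x 0⌋ % (k:ℤ)).toNat = (⌊(N:ℝ) * y 0⌋ % (k:ℤ)).toNat :=
        congrArg Fin.val h
      have h1 : 0 ≤ ⌊(N:ℝ) * x 0⌋ % (k:ℤ) := Int.emod_nonneg _ hkz
      have h2 : 0 ≤ ⌊(N:ℝ) * y 0⌋ % (k:ℤ) := Int.emod_nonneg _ hkz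
      rw [← Int.toNat_of_nonneg h1, ← Int.toNat_of_nonneg h2, h']
    · intro h; simp only [h]
  -- measurability of c
  have hx0 : Measurable fun x : Plane => x 0 :=
    (measurable_pi_apply 0).comp (MeasurableEquiv.toLp 2 (Fin 2 → ℝ)).symm.measurable
  have hcm : Measurable c := by
    rw [hc]
    exact Measurable.comp (f := fun x : Plane => ⌊(N:ℝ) * x 0⌋)
      (g := fun z : ℤ => (⟨(z % (k:ℤ)).toNat, hmodlt z⟩ : Fin k))
      measurable_from_top ((measurable_const.mul hx0).floor)
  -- linear independence
  have hli : LinearIndependent ℝ ![u, v] := by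
    rw [linearIndependent_fin2]
    constructor
    · simp only [Matrix.cons_val_one, Matrix.head_cons]
      intro h
      have : v 0 = (0 : Plane) 0 := by rw [show v = 0 from h]
      have h0 : v 0 = q := rfl
      have h1 : (0 : Plane) 0 = 0 := rfl
      rw [h0, h1] at this
      exact absurd this (ne_of_gt hq)
    · intro a
      simp only [Matrix.cons_val_one, Matrix.head_cons, Matrix.cons_val_zero]
      intro h
      have : (a • v) 1 = u 1 := by rw [h]
      have h0 : (a • v) 1 = a * 0 := rfl
      have h1 : u 1 = 1 := rfl
      rw [h0, h1] at this
      norm_num at this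
  -- periodicity
  have hper : ∀ x : Plane, c (x + u) = c x ∧ c (x + v) = c x := by
    intro x
    constructor
    · rw [hceq]
      have : (x + u) 0 = x 0 + 0 := rfl
      rw [this]; norm_num
    · rw [hceq]
      have h0 : (x + v) 0 = x 0 + q := rfl
      rw [h0]
      have h1 : (N:ℝ) * (x 0 + q) = (N:ℝ) * x 0 + ((k:ℤ):ℝ) := by push_cast; rw [mul_add, hNq]
      rw [h1, Int.floor_add_intCast, show ⌊(N:ℝ) * x 0⌋ + (k:ℤ) = ⌊(N:ℝ) * x 0⌋ + (k:ℤ) * 1 by ring, Int.add_mul_emod_self_left]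

  -- fundamental domain
  have hpara : para u v = {x : Plane | (0 ≤ x 0 ∧ x 0 < q) ∧ (0 ≤ x 1 ∧ x 1 < 1)} := by
    ext x
    constructor
    · rintro ⟨t, s, ht0, ht1, hs0, hs1, rfl⟩
      have e0 : (t • u + s • v) 0 = t * 0 + s * q := rfl
      have e1 : (t • u + s • v) 1 = t * 1 + s * 0 := rfl
      constructor
      · rw [e0]; constructor
        · positivity
        · nlinarith
      · rw [e1]; constructor
        · linarith
        · linarith
    · rintro ⟨⟨h1, h2⟩, h3, h4⟩
      refine ⟨x 1, x 0 / q, h3, h4, by positivity, (div_lt_one hq).2 h2, ?_⟩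
      have e0 : (x 1 • u + (x 0 / q) • v) 0 = x 1 * 0 + x 0 / q * q := rfl
      have e1 : (x 1 • u + (x 0 / q) • v) 1 = x 1 * 1 + x 0 / q * 0 := rfl
      have : ∀ i : Fin 2, x i = (x 1 • u + (x 0 / q) • v) i :=
        Fin.forall_fin_two.2 ⟨by rw [e0]; field_simp; ring, by rw [e1]; ring⟩
      exact (WithLp.ext_iff 2).2 (funext this)
  -- volume of fundamental domain
  have hx1 : Measurable fun x : Plane => x 1 :=
    (measurable_pi_apply 1).comp (MeasurableEquiv.toLp 2 (Fin 2 → ℝ)).symm.measurable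
  have hparameas : MeasurableSet (para u v) := by
    rw [hpara]
    have : {x : Plane | (0 ≤ x 0 ∧ x 0 < q) ∧ (0 ≤ x 1 ∧ x 1 < 1)}
        = (fun x : Plane => x 0) ⁻¹' Set.Ico 0 q ∩ (fun x : Plane => x 1) ⁻¹' Set.Ico 0 1 := by
      ext x; simp [Set.mem_Ico, and_assoc]
    rw [this]
    exact (hx0 measurableSet_Ico).inter (hx1 measurableSet_Ico)
  have hvol : volume (para u v) = ENNReal.ofReal q := by
    have hT : para u v = (MeasurableEquiv.toLp 2 (Fin 2 → ℝ)).symm ⁻¹'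
        (Set.univ.pi fun i : Fin 2 => Set.Ico (0:ℝ) (![q, 1] i)) := by
      rw [hpara]
      ext x
      simp only [Set.mem_preimage, Set.mem_pi, Set.mem_univ, forall_true_left, Set.mem_Ico,
        Set.mem_setOf_eq]
      constructor
      · rintro ⟨⟨a1, a2⟩, a3, a4⟩
        intro i; fin_cases i
        · exact ⟨a1, a2⟩
        · exact ⟨a3, a4⟩
      · intro h
        exact ⟨⟨(h 0).1, (h 0).2⟩, (h 1).1, (h 1).2⟩
    rw [hT, (EuclideanSpace.volume_preserving_symm_measurableEquiv_toLp (Fin 2)).measure_preimage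
      ((MeasurableSet.univ_pi fun i => measurableSet_Ico).nullMeasurableSet)]
    rw [volume_pi_pi]
    rw [Fin.prod_univ_two]
    simp [Real.volume_Ico]
  have hvolR : (volume (para u v)).toReal = q := by
    rw [hvol, ENNReal.toReal_ofReal hq.le]
  have hdirc : Continuous dir := by
    unfold dir vec
    exact (PiLp.continuous_toLp 2 (fun _ : Fin 2 => ℝ)).comp
      (continuous_pi fun i => by fin_cases i <;> simp [Real.continuous_cos, Real.continuous_sin])
  have hN1R : (1:ℝ) ≤ (N:ℝ) := by exact_mod_cast hN1
  have hinner : ∀ a : Plane,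
      (∫ θ in (0:ℝ)..(2*π), if c a = c (a + dir θ) then (1:ℝ) else 0) ≤ 2*π/(k:ℝ) := by
    intro a
    set r : ℝ := (N:ℝ) * a 0 with hr
    set f : ℝ := Int.fract r with hf
    have hf0 : 0 ≤ f := Int.fract_nonneg r
    have hf1 : f < 1 := Int.fract_lt_one r
    set α : ℝ := -(f / N) with hα
    set β : ℝ := (1 - f) / N with hβ
    have hfN0 : 0 ≤ f / (N:ℝ) := by positivity
    have hfN1 : f / (N:ℝ) ≤ 1 := by rw [div_le_one hNpos]; linarith
    have h1fN0 : 0 ≤ (1-f) / (N:ℝ) := div_nonneg (by linarith) hNpos.le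
    have h1fN1 : (1-f) / (N:ℝ) ≤ 1 := by rw [div_le_one hNpos]; linarith
    have hαm : -1 ≤ α := by rw [hα]; linarith
    have hα0 : α ≤ 0 := by rw [hα]; linarith
    have hβ0 : 0 ≤ β := h1fN0
    have hβ1 : β ≤ 1 := h1fN1
    have himp : ∀ θ : ℝ, c a = c (a + dir θ) → α ≤ Real.cos θ ∧ Real.cos θ < β := by
      intro θ h
      rw [hceq] at h
      have hcoord : (a + dir θ) 0 = a 0 + Real.cos θ := rfl
      rw [hcoord] at h
      set t : ℝ := Real.cos θ with htdef
      have ht1 : t ≤ 1 := Real.cos_le_one θ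
      have ht2 : -1 ≤ t := Real.neg_one_le_cos θ
      have hrw : (N:ℝ) * (a 0 + t) = r + (N:ℝ) * t := by rw [hr]; ring
      rw [hrw] at h
      have hNcast : ((N:ℤ):ℝ) = (N:ℝ) := by push_cast; rfl
      have hub : ⌊r + (N:ℝ)*t⌋ ≤ ⌊r⌋ + (N:ℤ) := by
        have h1 : r + (N:ℝ)*t ≤ r + ((N:ℤ):ℝ) := by rw [hNcast]; nlinarith
        have h2 := Int.floor_le_floor h1
        rwa [Int.floor_add_intCast] at h2
      have hlb : ⌊r⌋ - (N:ℤ) ≤ ⌊r + (N:ℝ)*t⌋ := by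
        have h1 : r - ((N:ℤ):ℝ) ≤ r + (N:ℝ)*t := by rw [hNcast]; nlinarith
        have h2 := Int.floor_le_floor h1
        rwa [Int.floor_sub_intCast] at h2
      have hdvd : (k:ℤ) ∣ (⌊r + (N:ℝ)*t⌋ - ⌊r⌋) :=
        Int.ModEq.dvd (h : Int.ModEq (k:ℤ) ⌊r⌋ ⌊r + (N:ℝ)*t⌋)
      have hNlt : (N:ℤ) < (k:ℤ) := by exact_mod_cast (by omega : N < k)
      have hd0 : ⌊r + (N:ℝ)*t⌋ = ⌊r⌋ := by
        rcases hdvd with ⟨e, he⟩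
        have he0 : e = 0 := by
          rcases lt_trichotomy e 0 with h'|h'|h'
          · exfalso
            have hm : (k:ℤ) * e ≤ (k:ℤ) * (-1) :=
              mul_le_mul_of_nonneg_left (by omega) (by omega)
            linarith
          · exact h'
          · exfalso
            have hm : (k:ℤ) * 1 ≤ (k:ℤ) * e :=
              mul_le_mul_of_nonneg_left (by omega) (by omega)
            linarith
        rw [he0, mul_zero] at he
        omega
      have hfl : (⌊r⌋:ℝ) ≤ r + (N:ℝ)*t := by
        have h2 := Int.floor_le (r + (N:ℝ)*t)
        rw [hd0] at h2
        exact h2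
      have hfu : r + (N:ℝ)*t < (⌊r⌋:ℝ) + 1 := by
        have h2 := Int.lt_floor_add_one (r + (N:ℝ)*t)
        rw [hd0] at h2
        exact h2
      have hfr : f = r - (⌊r⌋:ℝ) := by rw [hf]; exact (Int.self_sub_floor r).symm
      have hcm' : t * (N:ℝ) = (N:ℝ) * t := mul_comm _ _
      constructor
      · rw [hα, ← neg_div, div_le_iff₀ hNpos]
        linarith
      · rw [hβ, lt_div_iff₀ hNpos]
        linarith
    have hPmeas : MeasurableSet {θ : ℝ | c a = c (a + dir θ)} := by
      have hmap : Measurable fun θ : ℝ => c (a + dir θ) :=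
        hcm.comp (Continuous.measurable (continuous_const.add hdirc))
      have hset : {θ : ℝ | c a = c (a + dir θ)} = (fun θ => c (a + dir θ)) ⁻¹' {c a} := by
        ext θ; simp [eq_comm]
      rw [hset]
      exact hmap (measurableSet_singleton _)
    have hb := theta_bound (fun θ => c a = c (a + dir θ)) hPmeas α β hαm hα0 hβ0 hβ1 himp
    have harc : Real.arccos α - Real.arccos β
        = Real.arcsin (f/(N:ℝ)) + Real.arcsin ((1-f)/(N:ℝ)) := by
      rw [hα, hβ, Real.arccos_neg, Real.arccos_eq_pi_div_two_sub_arcsin,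
        Real.arccos_eq_pi_div_two_sub_arcsin]
      ring
    have hs1 := arcsin_le_bound _ hfN0 hfN1
    have hs2 := arcsin_le_bound _ h1fN0 h1fN1
    have hsum : π/2 * (f/(N:ℝ)) + π/2 * ((1-f)/(N:ℝ)) = π/2 * (1/(N:ℝ)) := by
      field_simp
      ring
    have hfin : π * (1/(N:ℝ)) ≤ 2*π/(k:ℝ) := by
      rw [mul_one_div, div_le_div_iff₀ hNpos hk0]
      nlinarith
    have hfinal : 2*(Real.arccos α - Real.arccos β) ≤ 2*π/(k:ℝ) := by
      rw [harc]
      nlinarith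
    linarith
  have hnn : ∀ a : Plane,
      0 ≤ ∫ θ in (0:ℝ)..(2*π), if c a = c (a + dir θ) then (1:ℝ) else 0 := by
    intro a
    apply intervalIntegral.integral_nonneg (by positivity)
    intro w _
    split <;> norm_num
  have hconst : IntegrableOn (fun _ : Plane => 2*π/(k:ℝ)) (para u v) volume := by
    refine integrableOn_const ?_
    rw [hvol]
    exact ENNReal.ofReal_ne_top
  have houter : (∫ a in para u v, ∫ θ in (0:ℝ)..(2*π), if c a = c (a + dir θ) then (1:ℝ) else 0)
      ≤ q * (2*π/(k:ℝ)) := by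
    have hmono := integral_mono_of_nonneg (μ := volume.restrict (para u v))
      (ae_of_all _ hnn) hconst (ae_of_all _ hinner)
    rwa [MeasureTheory.setIntegral_const, measureReal_def, hvolR, smul_eq_mul] at hmono
  refine ⟨c, u, v, hcm, hli, hper, ?_⟩
  unfold pper
  rw [hvolR]
  have hcoef : (0:ℝ) ≤ 1 / (2*π*q) := by positivity
  have hfinal := mul_le_mul_of_nonneg_left houter hcoef
  have heq : 1/(2*π*q) * (q * (2*π/(k:ℝ))) = 1/(k:ℝ) := by
    field_simp
  linarith [hfinal, heq]

end
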